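/- Let w ∈ W be a basic involution. Then the coadjoint B-orbit Ω_w is the union of the coadjoint U-orbits Θ_{w,ξ}: Ω_w = ⋃_ξ Θ_{w,ξ}, where the union is taken over all maps ξ : Supp(w) → ℂ^×. -/

import Mathlib

/-!
The Weyl group of type `Dₙ`, realized as the group of permutations `w` of `ℤ`
supported on `{±1, …, ±n}` with `w (-i) = - w i` and an even number of sign changes.
-/

open Equiv

/-- The simple reflections of type `Dₙ`, indexed by `i ∈ {1, …, n}`:
`sᵢ = (i, i+1)(-i, -(i+1))` for `1 ≤ i ≤ n - 1`, and
`sₙ = (n-1, -n)(-(n-1), n)`. -/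
def simpleRefl (n : ℕ) (i : ℕ) : Equiv.Perm ℤ :=
  if i < n then Equiv.swap (i : ℤ) ((i : ℤ) + 1) * Equiv.swap (-(i : ℤ)) (-((i : ℤ) + 1))
  else Equiv.swap ((n : ℤ) - 1) (-(n : ℤ)) * Equiv.swap (-((n : ℤ) - 1)) (n : ℤ)

/-- A word in the letters `{1, …, n}` (indices of simple reflections). -/
def IsWord (n : ℕ) (L : List ℕ) : Prop := ∀ i ∈ L, 1 ≤ i ∧ i ≤ n

/-- The product `s_{i₁} ⋯ s_{i_l}` of the word `L = [i₁, …, i_l]`. -/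
def wordProd (n : ℕ) (L : List ℕ) : Equiv.Perm ℤ := (L.map (simpleRefl n)).prod

/-- Membership in the Weyl group `W` of type `Dₙ`: a permutation of `ℤ` commuting with
negation, fixing every integer of absolute value `> n`, and with an even number of
`i ∈ {1, …, n}` such that `w i < 0`. -/
def IsD (n : ℕ) (w : Equiv.Perm ℤ) : Prop :=
  (∀ i : ℤ, w (-i) = -(w i)) ∧ (∀ i : ℤ, (n : ℤ) < |i| → w i = i) ∧
    Even (((Finset.Icc (1 : ℤ) (n : ℤ)).filter fun i => w i < 0).card)

/-- The length `ℓ(w)`: the minimal number of factors in an expression of `w` as a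
product of simple reflections. -/
noncomputable def weylLength (n : ℕ) (w : Equiv.Perm ℤ) : ℕ :=
  sInf {l | ∃ L : List ℕ, IsWord n L ∧ L.length = l ∧ wordProd n L = w}

/-- `L` is a reduced decomposition of `w`. -/
def IsReducedWord (n : ℕ) (w : Equiv.Perm ℤ) (L : List ℕ) : Prop :=
  IsWord n L ∧ wordProd n L = w ∧ L.length = weylLength n w

/-- `w` is a basic involution: `w ∈ W`, `w² = id`, and `w i ≠ -i` for all `i ∈ {1, …, n}`. -/
def IsBasicInvolution (n : ℕ) (w : Equiv.Perm ℤ) : Prop :=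
  IsD n w ∧ w * w = 1 ∧ ∀ i : ℤ, 1 ≤ i → i ≤ (n : ℤ) → w i ≠ -i

/-!
The group `SO₂ₙ(ℂ)`, its subgroups `B`, `U`, `T`, and the coadjoint action on `𝔫*`.
Rows and columns of `2n × 2n` matrices are indexed by `1, …, n, -n, …, -1`; the index
`i > 0` labels row `i - 1` (0-based) and the index `-j` labels row `2n - j` (0-based).
-/

/-- `2n × 2n` complex matrices. -/
abbrev Mat (n : ℕ) : Type := Matrix (Fin (2 * n)) (Fin (2 * n)) ℂ

/-- The matrix `J` with `1`'s on the antidiagonal and `0`'s elsewhere. -/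
def antidiagJ (n : ℕ) : Mat n :=
  Matrix.of fun i j => if (i : ℕ) + (j : ℕ) = 2 * n - 1 then 1 else 0

/-- The strictly lower-triangular part of a matrix. -/
def lowPart (n : ℕ) (M : Mat n) : Mat n :=
  Matrix.of fun i j => if (j : ℕ) < (i : ℕ) then M i j else 0

/-- Membership in `SO₂ₙ(ℂ) = {g ∈ SL₂ₙ(ℂ) : gᵀ J g = J}`. -/
def IsSO (n : ℕ) (g : Mat n) : Prop :=
  g.det = 1 ∧ g.transpose * antidiagJ n * g = antidiagJ n

/-- The Borel subgroup `B`: upper-triangular matrices in `SO₂ₙ(ℂ)`. -/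
def Bset (n : ℕ) : Set (Mat n) :=
  {g | IsSO n g ∧ ∀ i j : Fin (2 * n), (j : ℕ) < (i : ℕ) → g i j = 0}

/-- The unipotent radical `U`: upper-triangular matrices in `SO₂ₙ(ℂ)` with `1`'s on
the diagonal. -/
def Uset (n : ℕ) : Set (Mat n) := {g | g ∈ Bset n ∧ ∀ i, g i i = 1}

/-- The maximal torus `T`: diagonal matrices in `SO₂ₙ(ℂ)`. -/
def Tset (n : ℕ) : Set (Mat n) := {g | IsSO n g ∧ ∀ i j, i ≠ j → g i j = 0}

/-- The coadjoint action `b.λ = (b λ b⁻¹)_low`. -/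
noncomputable def coad (n : ℕ) (b lam : Mat n) : Mat n := lowPart n (b * lam * b⁻¹)

/-- The support of an involution `w`, encoded as triples: `(i, j, false)` stands for the
root `ε_{i+1} - ε_{j+1}` (so `w (i+1) = j+1`), `(i, j, true)` for `ε_{i+1} + ε_{j+1}`
(so `w (i+1) = -(j+1)`); here `i < j` as elements of `Fin n` (0-based indexing). -/
def suppFinset (n : ℕ) (w : Equiv.Perm ℤ) : Finset (Fin n × Fin n × Bool) :=
  Finset.univ.filter fun r =>
    r.1 < r.2.1 ∧
      ((r.2.2 = false ∧ w (((r.1 : ℕ) : ℤ) + 1) = ((r.2.1 : ℕ) : ℤ) + 1) ∨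
       (r.2.2 = true ∧ w (((r.1 : ℕ) : ℤ) + 1) = -(((r.2.1 : ℕ) : ℤ) + 1)))

/-- The basis vector `e_β*` of `𝔫*`: for `β = ε_i - ε_j` (1-based `i < j`),
`e_β* = E_{j,i} - E_{-i,-j}`; for `β = ε_i + ε_j`, `e_β* = E_{-j,i} - E_{-i,j}`. -/
def eStar (n : ℕ) (r : Fin n × Fin n × Bool) : Mat n :=
  if r.2.2 then
    Matrix.single ⟨2 * n - 1 - (r.2.1 : ℕ), by have := r.2.1.isLt; omega⟩
        ⟨(r.1 : ℕ), by have := r.1.isLt; omega⟩ 1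
      - Matrix.single ⟨2 * n - 1 - (r.1 : ℕ), by have := r.1.isLt; omega⟩
        ⟨(r.2.1 : ℕ), by have := r.2.1.isLt; omega⟩ 1
  else
    Matrix.single ⟨(r.2.1 : ℕ), by have := r.2.1.isLt; omega⟩
        ⟨(r.1 : ℕ), by have := r.1.isLt; omega⟩ 1
      - Matrix.single ⟨2 * n - 1 - (r.1 : ℕ), by have := r.1.isLt; omega⟩
        ⟨2 * n - 1 - (r.2.1 : ℕ), by have := r.2.1.isLt; omega⟩ 1

/-- The linear form `f_{w,ξ} = ∑_{β ∈ Supp(w)} ξ(β) e_β*`. -/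
noncomputable def fwxi (n : ℕ) (w : Equiv.Perm ℤ) (xi : Fin n × Fin n × Bool → ℂˣ) : Mat n :=
  ∑ r ∈ suppFinset n w, ((xi r : ℂ) • eStar n r)

/-- The linear form `f_w = ∑_{β ∈ Supp(w)} e_β*`. -/
noncomputable def fw (n : ℕ) (w : Equiv.Perm ℤ) : Mat n := ∑ r ∈ suppFinset n w, eStar n r

/-- The coadjoint `B`-orbit `Ω_w` of `f_w`. -/
def OmegaSet (n : ℕ) (w : Equiv.Perm ℤ) : Set (Mat n) :=
  {m | ∃ b ∈ Bset n, m = coad n b (fw n w)}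

/-- The coadjoint `U`-orbit `Θ_{w,ξ}` of `f_{w,ξ}`. -/
def ThetaSet (n : ℕ) (w : Equiv.Perm ℤ) (xi : Fin n × Fin n × Bool → ℂˣ) : Set (Mat n) :=
  {m | ∃ u ∈ Uset n, m = coad n u (fwxi n w xi)}

/-! ### Auxiliary machinery for the proof -/

open Matrix in
private lemma diag_conj_std {N : ℕ} (d e : Fin N → ℂ) (a c : Fin N) (v : ℂ) :
    Matrix.diagonal d * Matrix.single a c v * Matrix.diagonal e =
      Matrix.single a c (d a * v * e c) := by
  ext i j
  simp only [Matrix.mul_diagonal, Matrix.diagonal_mul, Matrix.single, Matrix.of_apply]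
  split_ifs with h
  · obtain ⟨rfl, rfl⟩ := h; ring
  · simp

/-- The positive index `a + 1` viewed in `Fin (2 * n)`. -/
private def posI {n : ℕ} (a : Fin n) : Fin (2 * n) := ⟨(a : ℕ), by have := a.isLt; omega⟩

/-- The scalar by which the diagonal matrix `diagonal d` scales `eStar n r`. -/
private noncomputable def scD (n : ℕ) (d : Fin (2 * n) → ℂ) (r : Fin n × Fin n × Bool) : ℂ :=
  if r.2.2 then (d (posI r.1) * d (posI r.2.1))⁻¹ else d (posI r.2.1) * (d (posI r.1))⁻¹

private lemma scD_ne_zero (n : ℕ) (d : Fin (2 * n) → ℂ) (hd : ∀ a, d a ≠ 0)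
    (r : Fin n × Fin n × Bool) : scD n d r ≠ 0 := by
  unfold scD
  split_ifs
  · exact inv_ne_zero (mul_ne_zero (hd _) (hd _))
  · exact mul_ne_zero (hd _) (inv_ne_zero (hd _))

private lemma inv_diag_eq {N : ℕ} (d : Fin N → ℂ) (hd : ∀ a, d a ≠ 0) :
    (Matrix.diagonal d)⁻¹ = Matrix.diagonal (fun a => (d a)⁻¹) := by
  apply Matrix.inv_eq_right_inv
  rw [Matrix.diagonal_mul_diagonal]
  have : (fun a => d a * (d a)⁻¹) = fun _ => (1 : ℂ) := funext fun a => mul_inv_cancel₀ (hd a)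
  rw [this, Matrix.diagonal_one]

private lemma conj_eStar (n : ℕ) (d : Fin (2 * n) → ℂ)
    (hpair : ∀ a : Fin (2 * n), d a * d ⟨2 * n - 1 - (a : ℕ), by have := a.isLt; omega⟩ = 1)
    (r : Fin n × Fin n × Bool) :
    Matrix.diagonal d * eStar n r * Matrix.diagonal (fun a => (d a)⁻¹) =
      scD n d r • eStar n r := by
  obtain ⟨i, j, b⟩ := r
  have hpi := hpair (posI i)
  have hpj := hpair (posI j)
  have hi2 : d ⟨2 * n - 1 - (i : ℕ), by have := i.isLt; omega⟩ = (d (posI i))⁻¹ :=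
    (inv_eq_of_mul_eq_one_right hpi).symm
  have hj2 : d ⟨2 * n - 1 - (j : ℕ), by have := j.isLt; omega⟩ = (d (posI j))⁻¹ :=
    (inv_eq_of_mul_eq_one_right hpj).symm
  have hine : d (posI i) ≠ 0 := left_ne_zero_of_mul_eq_one hpi
  have hjne : d (posI j) ≠ 0 := left_ne_zero_of_mul_eq_one hpj
  cases b <;>
    simp only [eStar, scD, if_true, if_false, Bool.false_eq_true, mul_sub, sub_mul,
      diag_conj_std, smul_sub, Matrix.smul_single, smul_eq_mul, mul_one] <;>
    rw [hi2, hj2] <;> simp only [posI] <;>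
    congr 1 <;> congr 1 <;> field_simp <;> ring

private lemma conj_fw (n : ℕ) (w : Equiv.Perm ℤ) (d : Fin (2 * n) → ℂ)
    (hd : ∀ a, d a ≠ 0)
    (hpair : ∀ a : Fin (2 * n), d a * d ⟨2 * n - 1 - (a : ℕ), by have := a.isLt; omega⟩ = 1)
    (xi : Fin n × Fin n × Bool → ℂˣ)
    (hxi : ∀ r ∈ suppFinset n w, (xi r : ℂ) = scD n d r) :
    Matrix.diagonal d * fw n w * (Matrix.diagonal d)⁻¹ = fwxi n w xi := by
  rw [inv_diag_eq d hd, fw, fwxi, Finset.mul_sum, Finset.sum_mul]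
  refine Finset.sum_congr rfl fun r hr => ?_
  rw [conj_eStar n d hpair r, hxi r hr]

private lemma prod_pair_eq_one (n : ℕ) (d : Fin (2 * n) → ℂ)
    (hpair : ∀ a : Fin (2 * n), d a * d ⟨2 * n - 1 - (a : ℕ), by have := a.isLt; omega⟩ = 1) :
    ∏ a, d a = 1 := by
  refine Finset.prod_involution
    (fun (a : Fin (2 * n)) (_ : a ∈ Finset.univ) =>
      (⟨2 * n - 1 - (a : ℕ), by have := a.isLt; omega⟩ : Fin (2 * n)))
    (fun a _ => hpair a) (fun a _ _ h => ?_) (fun a _ => Finset.mem_univ _) (fun a _ => ?_)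
  · have h2 : 2 * n - 1 - (a : ℕ) = (a : ℕ) := congrArg Fin.val h
    have := a.isLt
    omega
  · apply Fin.ext
    show 2 * n - 1 - (2 * n - 1 - (a : ℕ)) = (a : ℕ)
    have := a.isLt
    omega

private lemma diag_J_diag (n : ℕ) (d : Fin (2 * n) → ℂ)
    (hpair : ∀ a : Fin (2 * n), d a * d ⟨2 * n - 1 - (a : ℕ), by have := a.isLt; omega⟩ = 1) :
    Matrix.diagonal d * antidiagJ n * Matrix.diagonal d = antidiagJ n := by
  ext i j
  simp only [Matrix.mul_diagonal, Matrix.diagonal_mul, antidiagJ, Matrix.of_apply]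
  split_ifs with h
  · have hj : j = (⟨2 * n - 1 - (i : ℕ), by have := i.isLt; omega⟩ : Fin (2 * n)) := by
      apply Fin.ext
      show (j : ℕ) = 2 * n - 1 - (i : ℕ)
      have := i.isLt; have := j.isLt; omega
    rw [hj, mul_one]
    exact hpair i
  · ring
private lemma borel_tJb (n : ℕ) (g : Mat n) (x y : Fin (2 * n)) :
    (g.transpose * antidiagJ n * g) x y =
      ∑ k : Fin (2 * n), g ⟨2 * n - 1 - (k : ℕ), by have := k.isLt; omega⟩ x * g k y := by
  rw [Matrix.mul_apply]
  refine Finset.sum_congr rfl fun k _ => ?_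
  congr 1
  rw [Matrix.mul_apply]
  rw [Finset.sum_eq_single (⟨2 * n - 1 - (k : ℕ), by have := k.isLt; omega⟩ : Fin (2 * n))]
  · simp only [Matrix.transpose_apply, antidiagJ, Matrix.of_apply]
    rw [if_pos (show (2 * n - 1 - (k : ℕ)) + (k : ℕ) = 2 * n - 1 by
      have := k.isLt; omega), mul_one]
  · intro l _ hl
    simp only [Matrix.transpose_apply, antidiagJ, Matrix.of_apply]
    rw [if_neg, mul_zero]
    intro hc
    apply hl
    apply Fin.ext
    show (l : ℕ) = 2 * n - 1 - (k : ℕ)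
    have := l.isLt; have := k.isLt
    omega
  · intro hmem; exact absurd (Finset.mem_univ _) hmem

private lemma borel_diag_pair (n : ℕ) {g : Mat n} (hg : g ∈ Bset n) (i : Fin (2 * n)) :
    g i i * g ⟨2 * n - 1 - (i : ℕ), by have := i.isLt; omega⟩
      ⟨2 * n - 1 - (i : ℕ), by have := i.isLt; omega⟩ = 1 := by
  obtain ⟨⟨_, hso⟩, hup⟩ := hg
  have hi := i.isLt
  have h := congr_fun (congr_fun hso i)
    (⟨2 * n - 1 - (i : ℕ), by omega⟩ : Fin (2 * n))
  rw [borel_tJb] at h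
  have hJ : antidiagJ n i (⟨2 * n - 1 - (i : ℕ), by omega⟩ : Fin (2 * n)) = 1 := by
    simp only [antidiagJ, Matrix.of_apply]
    rw [if_pos (show (i : ℕ) + (2 * n - 1 - (i : ℕ)) = 2 * n - 1 by omega)]
  rw [hJ] at h
  rw [Finset.sum_eq_single (⟨2 * n - 1 - (i : ℕ), by omega⟩ : Fin (2 * n))] at h
  · rw [← h]
    congr 2
    apply Fin.ext
    show (i : ℕ) = 2 * n - 1 - (2 * n - 1 - (i : ℕ))
    omega
  · intro k _ hk
    have hkne : (k : ℕ) ≠ 2 * n - 1 - (i : ℕ) := fun hc => hk (Fin.ext hc)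
    have hk2 := k.isLt
    rcases Nat.lt_or_ge (k : ℕ) (2 * n - 1 - (i : ℕ)) with hlt | hge
    · rw [hup ⟨2 * n - 1 - (k : ℕ), by omega⟩ i
        (show (i : ℕ) < 2 * n - 1 - (k : ℕ) by omega), zero_mul]
    · rw [hup k ⟨2 * n - 1 - (i : ℕ), by omega⟩
        (show 2 * n - 1 - (i : ℕ) < (k : ℕ) by omega), mul_zero]
  · intro hmem; exact absurd (Finset.mem_univ _) hmem
/-- The diagonal entries (at positive indices) of a torus element sending `f_w` to
`f_{w,ξ}`. -/
private noncomputable def d0 (n : ℕ) (w : Equiv.Perm ℤ) (xi : Fin n × Fin n × Bool → ℂˣ)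
    (a : Fin n) : ℂ :=
  if 0 < w (((a : ℕ) : ℤ) + 1) ∧ w (((a : ℕ) : ℤ) + 1) < ((a : ℕ) : ℤ) + 1 then
    (xi (⟨min ((w (((a : ℕ) : ℤ) + 1)).toNat - 1) (n - 1), by have := a.isLt; omega⟩, a, false) : ℂ)
  else if w (((a : ℕ) : ℤ) + 1) < 0 ∧ -(((a : ℕ) : ℤ) + 1) < w (((a : ℕ) : ℤ) + 1) then
    (((xi (⟨min ((-(w (((a : ℕ) : ℤ) + 1))).toNat - 1) (n - 1),
        by have := a.isLt; omega⟩, a, true))⁻¹ : ℂˣ) : ℂ)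
  else 1

private lemma d0_ne_zero (n : ℕ) (w : Equiv.Perm ℤ) (xi : Fin n × Fin n × Bool → ℂˣ)
    (a : Fin n) : d0 n w xi a ≠ 0 := by
  unfold d0
  split_ifs
  · exact Units.ne_zero _
  · exact Units.ne_zero _
  · exact one_ne_zero

/-- The full diagonal, extended to negative indices by inversion. -/
private noncomputable def dfun (n : ℕ) (w : Equiv.Perm ℤ) (xi : Fin n × Fin n × Bool → ℂˣ)
    (b : Fin (2 * n)) : ℂ :=
  if h : (b : ℕ) < n then d0 n w xi ⟨(b : ℕ), h⟩
  else (d0 n w xi ⟨2 * n - 1 - (b : ℕ), by have := b.isLt; omega⟩)⁻¹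

private lemma dfun_ne_zero (n : ℕ) (w : Equiv.Perm ℤ) (xi : Fin n × Fin n × Bool → ℂˣ)
    (b : Fin (2 * n)) : dfun n w xi b ≠ 0 := by
  unfold dfun
  split_ifs
  · exact d0_ne_zero n w xi _
  · exact inv_ne_zero (d0_ne_zero n w xi _)

private lemma dfun_pos (n : ℕ) (w : Equiv.Perm ℤ) (xi : Fin n × Fin n × Bool → ℂˣ)
    (a : Fin n) : dfun n w xi (posI a) = d0 n w xi a := by
  unfold dfun
  rw [dif_pos (show ((posI a : Fin (2 * n)) : ℕ) < n from a.isLt)]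
  congr 1

private lemma dfun_pair (n : ℕ) (w : Equiv.Perm ℤ) (xi : Fin n × Fin n × Bool → ℂˣ)
    (b : Fin (2 * n)) :
    dfun n w xi b * dfun n w xi ⟨2 * n - 1 - (b : ℕ), by have := b.isLt; omega⟩ = 1 := by
  have hb := b.isLt
  unfold dfun
  rcases Nat.lt_or_ge (b : ℕ) n with h | h
  · rw [dif_pos h, dif_neg (show ¬ ((⟨2 * n - 1 - (b : ℕ), by omega⟩ : Fin (2 * n)) : ℕ) < n
      by show ¬ 2 * n - 1 - (b : ℕ) < n; omega)]
    have he : (⟨2 * n - 1 - ((⟨2 * n - 1 - (b : ℕ), by omega⟩ : Fin (2 * n)) : ℕ),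
        by show 2 * n - 1 - (2 * n - 1 - (b : ℕ)) < n; omega⟩ : Fin n) = ⟨(b : ℕ), h⟩ := by
      apply Fin.ext
      show 2 * n - 1 - (2 * n - 1 - (b : ℕ)) = (b : ℕ)
      omega
    rw [he]
    exact mul_inv_cancel₀ (d0_ne_zero n w xi _)
  · rw [dif_neg (show ¬ (b : ℕ) < n by omega),
      dif_pos (show ((⟨2 * n - 1 - (b : ℕ), by omega⟩ : Fin (2 * n)) : ℕ) < n
        by show 2 * n - 1 - (b : ℕ) < n; omega)]
    exact inv_mul_cancel₀ (d0_ne_zero n w xi _)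
private lemma scD_dfun (n : ℕ) (w : Equiv.Perm ℤ) (hw : IsBasicInvolution n w)
    (xi : Fin n × Fin n × Bool → ℂˣ) :
    ∀ r ∈ suppFinset n w, (xi r : ℂ) = scD n (dfun n w xi) r := by
  obtain ⟨⟨hneg, -, -⟩, hww, -⟩ := hw
  have hinv : ∀ x : ℤ, w (w x) = x := by
    intro x
    have h := Equiv.ext_iff.mp hww x
    simpa using h
  rintro ⟨i, j, bb⟩ hr
  rw [suppFinset, Finset.mem_filter] at hr
  obtain ⟨-, hij, hcase⟩ := hr
  dsimp only at hij hcase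
  have hijn : (i : ℕ) < (j : ℕ) := hij
  have hin := i.isLt
  have hjn := j.isLt
  rcases hcase with ⟨hb, hval⟩ | ⟨hb, hval⟩
  · -- `bb = false`, `w (i+1) = j+1`
    subst hb
    have hwj : w (((j : ℕ) : ℤ) + 1) = ((i : ℕ) : ℤ) + 1 := by
      rw [← hval, hinv]
    have hdi : d0 n w xi i = 1 := by
      unfold d0
      rw [if_neg (by rw [hval]; omega), if_neg (by rw [hval]; omega)]
    have hdj : d0 n w xi j = (xi (i, j, false) : ℂ) := by
      unfold d0
      rw [if_pos (by rw [hwj]; omega)]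
      have he : (⟨min ((w (((j : ℕ) : ℤ) + 1)).toNat - 1) (n - 1),
          by have := hjn; omega⟩ : Fin n) = i := by
        apply Fin.ext
        show min ((w (((j : ℕ) : ℤ) + 1)).toNat - 1) (n - 1) = (i : ℕ)
        rw [hwj]; omega
      rw [he]
    simp only [scD, dfun_pos, hdi, hdj, if_false, Bool.false_eq_true, inv_one, mul_one]
  · -- `bb = true`, `w (i+1) = -(j+1)`
    subst hb
    have hwj : w (((j : ℕ) : ℤ) + 1) = -(((i : ℕ) : ℤ) + 1) := by
      have h1 : w (-(((j : ℕ) : ℤ) + 1)) = ((i : ℕ) : ℤ) + 1 := by rw [← hval, hinv]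
      have h2 := hneg (((j : ℕ) : ℤ) + 1)
      rw [h2] at h1
      omega
    have hdi : d0 n w xi i = 1 := by
      unfold d0
      rw [if_neg (by rw [hval]; omega), if_neg (by rw [hval]; omega)]
    have hdj : d0 n w xi j = ((xi (i, j, true) : ℂ))⁻¹ := by
      unfold d0
      rw [if_neg (by rw [hwj]; omega), if_pos (by rw [hwj]; omega)]
      have he : (⟨min ((-(w (((j : ℕ) : ℤ) + 1))).toNat - 1) (n - 1),
          by have := hjn; omega⟩ : Fin n) = i := by
        apply Fin.ext
        show min ((-(w (((j : ℕ) : ℤ) + 1))).toNat - 1) (n - 1) = (i : ℕ)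
        rw [hwj]; omega
      rw [he, Units.val_inv_eq_inv_val]
    simp only [scD, dfun_pos, hdi, hdj, if_true, one_mul, inv_inv]
private lemma so_mul (n : ℕ) {a b : Mat n} (ha : IsSO n a) (hb : IsSO n b) :
    IsSO n (a * b) := by
  constructor
  · rw [Matrix.det_mul, ha.1, hb.1, one_mul]
  · rw [Matrix.transpose_mul]
    have h1 : b.transpose * a.transpose * antidiagJ n * (a * b) =
        b.transpose * (a.transpose * antidiagJ n * a) * b := by
      simp only [mul_assoc]
    rw [h1, ha.2, hb.2]

private lemma upper_mul (n : ℕ) {a b : Mat n}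
    (ha : ∀ i j : Fin (2 * n), (j : ℕ) < (i : ℕ) → a i j = 0)
    (hb : ∀ i j : Fin (2 * n), (j : ℕ) < (i : ℕ) → b i j = 0)
    (i j : Fin (2 * n)) (hij : (j : ℕ) < (i : ℕ)) : (a * b) i j = 0 := by
  rw [Matrix.mul_apply]
  apply Finset.sum_eq_zero
  intro k _
  rcases Nat.lt_or_ge (k : ℕ) (i : ℕ) with h | h
  · rw [ha i k h, zero_mul]
  · rw [hb k j (by omega), mul_zero]

private lemma diag_upper (n : ℕ) (e : Fin (2 * n) → ℂ) (i j : Fin (2 * n))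
    (hij : (j : ℕ) < (i : ℕ)) : Matrix.diagonal e i j = 0 :=
  Matrix.diagonal_apply_ne e (Fin.ne_of_val_ne (by omega))

private lemma diag_isSO (n : ℕ) (e : Fin (2 * n) → ℂ)
    (hpair : ∀ a : Fin (2 * n), e a * e ⟨2 * n - 1 - (a : ℕ), by have := a.isLt; omega⟩ = 1) :
    IsSO n (Matrix.diagonal e) := by
  constructor
  · rw [Matrix.det_diagonal]; exact prod_pair_eq_one n e hpair
  · rw [Matrix.diagonal_transpose]; exact diag_J_diag n e hpair

private lemma inv_pair {n : ℕ} {e : Fin (2 * n) → ℂ}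
    (hpair : ∀ a : Fin (2 * n), e a * e ⟨2 * n - 1 - (a : ℕ), by have := a.isLt; omega⟩ = 1) :
    ∀ a : Fin (2 * n),
      (fun a => (e a)⁻¹) a * (fun a => (e a)⁻¹) ⟨2 * n - 1 - (a : ℕ),
        by have := a.isLt; omega⟩ = 1 := by
  intro a
  dsimp only
  rw [← mul_inv, hpair a, inv_one]
/-- Let `w` be a basic involution in the Weyl group of type `Dₙ`,
`n ≥ 4`. Then the coadjoint `B`-orbit `Ω_w` is the union of the coadjoint `U`-orbits
`Θ_{w,ξ}` over all maps `ξ : Supp(w) → ℂˣ`. -/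
theorem statement6 (n : ℕ) (hn : 4 ≤ n) (w : Equiv.Perm ℤ)
    (hw : IsBasicInvolution n w) :
    OmegaSet n w = ⋃ xi : Fin n × Fin n × Bool → ℂˣ, ThetaSet n w xi := by
  ext m
  simp only [Set.mem_iUnion]
  constructor
  · rintro ⟨b, hbB, rfl⟩
    set d : Fin (2 * n) → ℂ := fun i => b i i with hd_def
    have hpair : ∀ a : Fin (2 * n),
        d a * d ⟨2 * n - 1 - (a : ℕ), by have := a.isLt; omega⟩ = 1 :=
      fun a => borel_diag_pair n hbB a
    have hd : ∀ a, d a ≠ 0 := fun a => left_ne_zero_of_mul_eq_one (hpair a)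
    set u : Mat n := b * Matrix.diagonal (fun a => (d a)⁻¹) with hu_def
    have hb_eq : b = u * Matrix.diagonal d := by
      rw [hu_def, mul_assoc, Matrix.diagonal_mul_diagonal]
      have h2 : (fun a => (d a)⁻¹ * d a) = fun _ => (1 : ℂ) :=
        funext fun a => inv_mul_cancel₀ (hd a)
      rw [h2, Matrix.diagonal_one, mul_one]
    set xi : Fin n × Fin n × Bool → ℂˣ :=
      fun r => Units.mk0 (scD n d r) (scD_ne_zero n d hd r) with hxi_def
    have hxi : ∀ r ∈ suppFinset n w, (xi r : ℂ) = scD n d r := fun r _ => rfl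
    refine ⟨xi, u, ⟨⟨so_mul n hbB.1 (diag_isSO n _ (inv_pair hpair)),
      upper_mul n hbB.2 (diag_upper n _)⟩, ?_⟩, ?_⟩
    · intro i
      rw [hu_def, Matrix.mul_diagonal]
      exact mul_inv_cancel₀ (hd i)
    · show coad n b (fw n w) = coad n u (fwxi n w xi)
      unfold coad
      congr 1
      rw [hb_eq, Matrix.mul_inv_rev, ← conj_fw n w d hd hpair xi hxi]
      simp only [mul_assoc]
  · rintro ⟨xi, u, huU, rfl⟩
    set d : Fin (2 * n) → ℂ := dfun n w xi with hd_def
    have hpair : ∀ a : Fin (2 * n),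
        d a * d ⟨2 * n - 1 - (a : ℕ), by have := a.isLt; omega⟩ = 1 :=
      fun a => dfun_pair n w xi a
    have hd : ∀ a, d a ≠ 0 := fun a => dfun_ne_zero n w xi a
    refine ⟨u * Matrix.diagonal d, ⟨so_mul n huU.1.1 (diag_isSO n d hpair),
      upper_mul n huU.1.2 (diag_upper n d)⟩, ?_⟩
    show coad n u (fwxi n w xi) = coad n (u * Matrix.diagonal d) (fw n w)
    unfold coad
    congr 1
    rw [Matrix.mul_inv_rev, ← conj_fw n w d hd hpair xi (scD_dfun n w hw xi)]
    simp only [mul_assoc]
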